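/- If 𝒥 is a T₀-system on Λ and ν is a 𝒥-separated probability mass function on X, then ν is the product of its one-dimensional marginals: ν(x) = Π_{i∈Λ} ν_i(x_i) for every x ∈ X. -/

import Mathlib

open Finset

/-- Restriction of a word to a set of coordinates `M`. -/
def restrictW {Λ : Type*} (K : Λ → Type*) (M : Finset Λ) (x : ∀ i, K i) :
    ∀ i : M, K i := fun i => x i

/-- Marginal of `μ` on the set of coordinates `M`. -/
def marginal {Λ : Type*} [Fintype Λ] [DecidableEq Λ] (K : Λ → Type*)
    [∀ i, Fintype (K i)] [∀ i, DecidableEq (K i)]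
    (μ : (∀ i, K i) → ℝ) (M : Finset Λ) (a : ∀ i : M, K i) : ℝ :=
  ∑ x : ∀ i, K i, if restrictW K M x = a then μ x else 0

/-- One-dimensional marginal of `μ` at coordinate `i`. -/
def marg1 {Λ : Type*} [Fintype Λ] [DecidableEq Λ] (K : Λ → Type*)
    [∀ i, Fintype (K i)] [∀ i, DecidableEq (K i)]
    (μ : (∀ i, K i) → ℝ) (i : Λ) (a : K i) : ℝ :=
  ∑ x : ∀ i, K i, if x i = a then μ x else 0

/-- `I`-recombination: the word equal to `a` on `I` and to `x` off `I`. -/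
def recombW {Λ : Type*} [DecidableEq Λ] (K : Λ → Type*) (I : Finset Λ)
    (x : ∀ i, K i) (a : ∀ i : I, K i) : ∀ i, K i :=
  fun i => if h : i ∈ I then a ⟨i, h⟩ else x i

/-- Right hand side of the recombination equation. -/
def recombRHS {Λ : Type*} [Fintype Λ] [DecidableEq Λ] (K : Λ → Type*)
    [∀ i, Fintype (K i)] [∀ i, DecidableEq (K i)]
    (𝒥 : Finset (Finset Λ))
    (φ : ∀ I : Finset Λ, (∀ i : I, K i) → (∀ i : I, K i) → ℝ)
    (μ : (∀ i, K i) → ℝ) (x : ∀ i, K i) : ℝ :=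
  ∑ I ∈ 𝒥, ∑ y : ∀ i : I, K i,
    (φ I y (restrictW K I x) * marginal K μ I (restrictW K I x) * μ (recombW K I x y)
      - φ I (restrictW K I x) y * marginal K μ I y * μ x)

/-- A probability mass function on `∀ i, K i`. -/
def IsPMF {Λ : Type*} [Fintype Λ] [DecidableEq Λ] (K : Λ → Type*) [∀ i, Fintype (K i)]
    (μ : (∀ i, K i) → ℝ) : Prop :=
  (∀ x, 0 ≤ μ x) ∧ ∑ x : ∀ i, K i, μ x = 1

/-- `𝒥`-separated measure. -/
def IsSeparated {Λ : Type*} [Fintype Λ] [DecidableEq Λ] (K : Λ → Type*)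
    [∀ i, Fintype (K i)] [∀ i, DecidableEq (K i)]
    (𝒥 : Finset (Finset Λ)) (μ : (∀ i, K i) → ℝ) : Prop :=
  ∀ I ∈ 𝒥, ∀ x, μ x = marginal K μ I (restrictW K I x) * marginal K μ Iᶜ (restrictW K Iᶜ x)

/-- A `T₀`-system of frames. -/
def IsT0 {Λ : Type*} (𝒥 : Finset (Finset Λ)) : Prop :=
  ∀ i j : Λ, i ≠ j → ∃ I ∈ 𝒥, (i ∈ I ∧ j ∉ I) ∨ (j ∈ I ∧ i ∉ I)

namespace SepAux
set_option linter.unusedSectionVars false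

open Finset

variable {Λ : Type*} [Fintype Λ] [DecidableEq Λ] {K : Λ → Type*}
    [∀ i, Fintype (K i)] [∀ i, DecidableEq (K i)]

/-- Lifted marginal: the marginal of `μ` on `S`, evaluated at the restriction of `x`. -/
def P (μ : (∀ i, K i) → ℝ) (S : Finset Λ) (x : ∀ i, K i) : ℝ :=
  marginal K μ S (restrictW K S x)

lemma restrict_eq_iff {S : Finset Λ} {y x : ∀ i, K i} :
    restrictW K S y = restrictW K S x ↔ ∀ i ∈ S, y i = x i := by
  constructor
  · intro h i hi; exact congrFun h ⟨i, hi⟩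
  · intro h; funext i; exact h i.1 i.2

lemma restrict_eq (S : Finset Λ) {y x : ∀ i, K i} (h : ∀ i ∈ S, y i = x i) :
    restrictW K S y = restrictW K S x := restrict_eq_iff.2 h

lemma P_congr (μ : (∀ i, K i) → ℝ) {M S : Finset Λ} (hMS : M ⊆ S) {y x : ∀ i, K i}
    (h : ∀ i ∈ S, y i = x i) : P μ M y = P μ M x := by
  unfold P; rw [restrict_eq M fun i hi => h i (hMS hi)]

lemma P_univ (μ : (∀ i, K i) → ℝ) (x : ∀ i, K i) : P μ Finset.univ x = μ x := by
  unfold P marginal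
  rw [Finset.sum_eq_single x]
  · rw [if_pos rfl]
  · intro y _ hne
    rw [if_neg]
    intro hc
    exact hne (funext fun i => congrFun hc ⟨i, Finset.mem_univ i⟩)
  · intro h; exact absurd (Finset.mem_univ x) h

lemma P_empty (μ : (∀ i, K i) → ℝ) (x : ∀ i, K i) : P μ (∅ : Finset Λ) x = ∑ y, μ y := by
  unfold P marginal
  refine Finset.sum_congr rfl fun y _ => ?_
  rw [if_pos]
  funext i
  exact absurd i.2 (Finset.notMem_empty _)

lemma P_singleton (μ : (∀ i, K i) → ℝ) (i : Λ) (x : ∀ j, K j) :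
    P μ {i} x = marg1 K μ i (x i) := by
  unfold P marginal marg1
  refine Finset.sum_congr rfl fun y _ => ?_
  by_cases h : y i = x i
  · rw [if_pos h, if_pos (restrict_eq _ fun j hj => by
      obtain rfl := Finset.mem_singleton.1 hj; exact h)]
  · rw [if_neg h, if_neg fun hc => h (restrict_eq_iff.1 hc i (Finset.mem_singleton_self i))]

/-- Tower property: summing the `W`-marginal over the fiber of `x` on `S` gives the
`S ∩ W` marginal, provided `Sᶜ ⊆ W`. -/
lemma tower (μ : (∀ i, K i) → ℝ) (S W : Finset Λ) (hW : Sᶜ ⊆ W) (x : ∀ i, K i) :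
    (∑ y, if restrictW K S y = restrictW K S x then P μ W y else 0)
      = P μ (S ∩ W) x := by
  unfold P marginal
  have h1 : ∀ y : ∀ i, K i,
      (if restrictW K S y = restrictW K S x then
        (∑ w : ∀ i, K i, if restrictW K W w = restrictW K W y then μ w else 0) else 0)
      = ∑ w : ∀ i, K i, if restrictW K S y = restrictW K S x then
          (if restrictW K W w = restrictW K W y then μ w else 0) else 0 := by
    intro y; split
    · rfl
    · simp
  rw [Finset.sum_congr rfl fun y _ => h1 y, Finset.sum_comm]
  refine Finset.sum_congr rfl fun w _ => ?_
  by_cases hc : restrictW K (S ∩ W) w = restrictW K (S ∩ W) x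
  · rw [if_pos hc]
    have hcc : ∀ i ∈ S ∩ W, w i = x i := restrict_eq_iff.1 hc
    rw [Finset.sum_eq_single (fun i => if h : i ∈ S then x i else w i)]
    · rw [if_pos (restrict_eq S fun i hi => dif_pos hi),
        if_pos (restrict_eq W fun i hi => ?_)]
      by_cases hiS : i ∈ S
      · rw [dif_pos hiS]
        exact hcc i (Finset.mem_inter.2 ⟨hiS, hi⟩)
      · rw [dif_neg hiS]
    · intro y _ hne
      by_cases h1 : restrictW K S y = restrictW K S x
      · rw [if_pos h1]
        by_cases h2 : restrictW K W w = restrictW K W y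
        · exfalso
          apply hne
          funext i
          by_cases hiS : i ∈ S
          · rw [dif_pos hiS]
            exact restrict_eq_iff.1 h1 i hiS
          · rw [dif_neg hiS]
            exact (restrict_eq_iff.1 h2 i (hW (Finset.mem_compl.2 hiS))).symm
        · rw [if_neg h2]
      · rw [if_neg h1]
    · intro h; exact absurd (Finset.mem_univ _) h
  · rw [if_neg hc]
    refine Finset.sum_eq_zero fun y _ => ?_
    by_cases h1 : restrictW K S y = restrictW K S x
    · rw [if_pos h1]
      by_cases h2 : restrictW K W w = restrictW K W y
      · exfalso
        apply hc
        refine restrict_eq _ fun i hi => ?_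
        obtain ⟨hiS, hiW⟩ := Finset.mem_inter.1 hi
        calc w i = y i := restrict_eq_iff.1 h2 i hiW
          _ = x i := restrict_eq_iff.1 h1 i hiS
      · rw [if_neg h2]
    · rw [if_neg h1]

/-- Marginalizing a product identity. -/
lemma step (μ : (∀ i, K i) → ℝ) (S0 M N S : Finset Λ)
    (hS0 : Sᶜ ⊆ S0) (hM : M ⊆ S) (hN : Sᶜ ⊆ N)
    (h : ∀ y, P μ S0 y = P μ M y * P μ N y) (x : ∀ i, K i) :
    P μ (S ∩ S0) x = P μ M x * P μ (S ∩ N) x := by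
  rw [← tower μ S S0 hS0 x, ← tower μ S N hN x, Finset.mul_sum]
  refine Finset.sum_congr rfl fun y _ => ?_
  by_cases hcond : restrictW K S y = restrictW K S x
  · rw [if_pos hcond, if_pos hcond, h y, P_congr μ hM (restrict_eq_iff.1 hcond)]
  · rw [if_neg hcond, if_neg hcond, mul_zero]

/-- `μ` splits as a product over `I` and its complement. -/
def Sep (μ : (∀ i, K i) → ℝ) (I : Finset Λ) : Prop :=
  ∀ x, P μ Finset.univ x = P μ I x * P μ Iᶜ x

lemma sep_univ {μ : (∀ i, K i) → ℝ} (htot : ∑ y, μ y = 1) :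
    Sep μ (Finset.univ : Finset Λ) := by
  intro x
  rw [Finset.compl_univ, P_empty μ x, htot, mul_one]

lemma sep_compl {μ : (∀ i, K i) → ℝ} {I : Finset Λ} (h : Sep μ I) : Sep μ Iᶜ := by
  intro x; rw [compl_compl, mul_comm]; exact h x

lemma sep_inter {μ : (∀ i, K i) → ℝ} {I J : Finset Λ}
    (hI : Sep μ I) (hJ : Sep μ J) : Sep μ (I ∩ J) := by
  have hJ' : ∀ y, P μ Finset.univ y = P μ Jᶜ y * P μ J y :=
    fun y => (hJ y).trans (mul_comm _ _)
  have hsub1 : J \ I ⊆ J := Finset.sdiff_subset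
  have G3 := step μ Finset.univ Jᶜ J (J \ I)ᶜ (Finset.subset_univ _)
    (Finset.compl_subset_compl.2 hsub1) (by rw [compl_compl]; exact hsub1) hJ'
  have e1 : (J \ I)ᶜ ∩ Finset.univ = (J \ I)ᶜ := Finset.inter_univ _
  have e2 : (J \ I)ᶜ ∩ J = I ∩ J := by
    ext k; simp only [Finset.mem_inter, Finset.mem_compl, Finset.mem_sdiff]; tauto
  rw [e1, e2] at G3
  have G3' : ∀ y, P μ (J \ I)ᶜ y = P μ (I ∩ J) y * P μ Jᶜ y :=
    fun y => (G3 y).trans (mul_comm _ _)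
  have H := step μ (J \ I)ᶜ (I ∩ J) Jᶜ (I ∪ J)
    (Finset.compl_subset_compl.2 (hsub1.trans Finset.subset_union_right))
    (Finset.inter_subset_left.trans Finset.subset_union_left)
    (Finset.compl_subset_compl.2 Finset.subset_union_right) G3'
  have e3 : (I ∪ J) ∩ (J \ I)ᶜ = I := by
    ext k; simp only [Finset.mem_inter, Finset.mem_union, Finset.mem_compl,
      Finset.mem_sdiff]; tauto
  have e4 : (I ∪ J) ∩ Jᶜ = I \ J := by
    ext k; simp only [Finset.mem_inter, Finset.mem_union, Finset.mem_compl,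
      Finset.mem_sdiff]; tauto
  rw [e3, e4] at H
  have hI' : ∀ y, P μ Finset.univ y = P μ Iᶜ y * P μ I y :=
    fun y => (hI y).trans (mul_comm _ _)
  have F1 := step μ Finset.univ Iᶜ I (I ∩ J)ᶜ (Finset.subset_univ _)
    (Finset.compl_subset_compl.2 Finset.inter_subset_left)
    (by rw [compl_compl]; exact Finset.inter_subset_left) hI'
  have e5 : (I ∩ J)ᶜ ∩ Finset.univ = (I ∩ J)ᶜ := Finset.inter_univ _
  have e6 : (I ∩ J)ᶜ ∩ I = I \ J := by
    ext k; simp only [Finset.mem_inter, Finset.mem_compl, Finset.mem_sdiff]; tauto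
  rw [e5, e6] at F1
  intro x
  rw [hI x, H x, F1 x]
  ring

end SepAux

/-- if `𝒥` is a `T₀`-system, a `𝒥`-separated probability mass function is the
product of its one-dimensional marginals. -/
theorem separated_eq_product_of_T0 {Λ : Type*} [Fintype Λ] [DecidableEq Λ] [Nonempty Λ]
    (K : Λ → Type*) [∀ i, Fintype (K i)] [∀ i, DecidableEq (K i)] [∀ i, Nonempty (K i)]
    (𝒥 : Finset (Finset Λ)) (hT0 : IsT0 𝒥)
    (ν : (∀ i, K i) → ℝ) (hν : IsPMF K ν)
    (hsep : IsSeparated K 𝒥 ν) :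
    ∀ x, ν x = ∏ i, marg1 K ν i (x i) := by
  obtain ⟨hpos, htot⟩ := hν
  have hsepP : ∀ I ∈ 𝒥, SepAux.Sep ν I := fun I hI x =>
    (SepAux.P_univ ν x).trans (hsep I hI x)
  -- singletons are separating
  have hsing : ∀ i : Λ, SepAux.Sep ν {i} := by
    intro i
    have hC : ∀ j : Λ, ∃ C : Finset Λ, SepAux.Sep ν C ∧ (j ≠ i → i ∈ C ∧ j ∉ C) := by
      intro j
      by_cases hji : j = i
      · exact ⟨Finset.univ, SepAux.sep_univ htot, fun h => absurd hji h⟩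
      · obtain ⟨I, hI𝒥, hcase⟩ := hT0 i j (fun h => hji h.symm)
        rcases hcase with ⟨hiI, hjI⟩ | ⟨hjI, hiI⟩
        · exact ⟨I, hsepP I hI𝒥, fun _ => ⟨hiI, hjI⟩⟩
        · exact ⟨Iᶜ, SepAux.sep_compl (hsepP I hI𝒥),
            fun _ => ⟨Finset.mem_compl.2 hiI, fun hc => (Finset.mem_compl.1 hc) hjI⟩⟩
    choose C hC1 hC2 using hC
    have hinf : ∀ s : Finset Λ, SepAux.Sep ν (s.inf C) := by
      intro s
      induction s using Finset.induction_on with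
      | empty =>
        have : (∅ : Finset Λ).inf C = Finset.univ := by
          rw [Finset.inf_empty]; rfl
        rw [this]; exact SepAux.sep_univ htot
      | @insert _ _ ha ih =>
        rw [Finset.inf_insert]; exact SepAux.sep_inter (hC1 _) ih
    have heq : (Finset.univ.erase i).inf C = {i} := by
      ext k
      rw [Finset.mem_singleton]
      constructor
      · intro hk
        by_contra hki
        have hkmem : k ∈ Finset.univ.erase i := Finset.mem_erase.2 ⟨hki, Finset.mem_univ k⟩
        have h2 : (Finset.univ.erase i).inf C ⊆ C k :=
          Finset.le_iff_subset.1 (Finset.inf_le hkmem)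
        exact (hC2 k hki).2 (h2 hk)
      · intro hk
        have hsub : ({i} : Finset Λ) ⊆ (Finset.univ.erase i).inf C := by
          rw [← Finset.le_iff_subset]
          refine Finset.le_inf fun j hj => ?_
          rw [Finset.le_iff_subset, Finset.singleton_subset_iff]
          exact (hC2 j (Finset.mem_erase.1 hj).1).1
        exact hsub (Finset.mem_singleton.2 hk)
    rw [← heq]; exact hinf _
  -- product formula by induction
  have hprod : ∀ s : Finset Λ, ∀ x, SepAux.P ν Finset.univ x
      = (∏ j ∈ s, SepAux.P ν {j} x) * SepAux.P ν sᶜ x := by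
    intro s
    induction s using Finset.induction_on with
    | empty =>
      intro x
      rw [Finset.prod_empty, one_mul, Finset.compl_empty]
    | @insert a s ha ih =>
      intro x
      have hsub : sᶜᶜ ⊆ ({a}ᶜ : Finset Λ) := by
        rw [compl_compl]
        intro k hk
        rw [Finset.mem_compl, Finset.mem_singleton]
        rintro rfl; exact ha hk
      have key := SepAux.step ν Finset.univ {a} {a}ᶜ sᶜ (Finset.subset_univ _)
        (Finset.singleton_subset_iff.2 (Finset.mem_compl.2 ha)) hsub (hsing a) x
      have e1 : sᶜ ∩ Finset.univ = sᶜ := Finset.inter_univ _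
      have e2 : sᶜ ∩ ({a}ᶜ : Finset Λ) = (insert a s)ᶜ := by
        ext k
        simp only [Finset.mem_inter, Finset.mem_compl, Finset.mem_singleton,
          Finset.mem_insert]
        tauto
      rw [e1, e2] at key
      rw [ih x, key, Finset.prod_insert ha]
      ring
  intro x
  have h1 := hprod Finset.univ x
  rw [Finset.compl_univ] at h1
  have h2 : SepAux.P ν (∅ : Finset Λ) x = 1 := by rw [SepAux.P_empty]; exact htot
  rw [h2, mul_one] at h1
  rw [← SepAux.P_univ ν x, h1]
  exact Finset.prod_congr rfl fun i _ => SepAux.P_singleton ν i x
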